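/- arXiv:2007.13822 — 2 statements merged into one kernel-verified Lean document; each statement's English description precedes it below -/
import Mathlib

section
/- Let B and P be real Banach spaces, let U ⊆ P be an open set, let m ≥ 1 be a natural number, and let κ ≥ 1/5 be a real number. Suppose S : B → B is m-times continuously (Fréchet) differentiable with S(0) = 0 and satisfies ‖S(ξ₁) − S(ξ₂)‖ ≤ κ(‖ξ₁‖ + ‖ξ₂‖)·‖ξ₁ − ξ₂‖ for all ξ₁, ξ₂ in the closed unit ball of B, and suppose η : U → B is m-times continuously differentiable with ‖η(a)‖ < 1/(10κ) for all a ∈ U. Then there is an m-times continuously differentiable map ξ : U → B such that for every a ∈ U one has ‖ξ(a)‖ ≤ 1/(5κ) and ξ(a) + S(ξ(a)) = η(a); moreover ξ(a) is the unique element of the closed ball of radius 1/(5κ) solving this equation. -/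
open NNReal

/-- Parametric addendum to the contraction-mapping lemma (Lemma 4.2 of the paper):
the unique small solution of `ξ + S ξ = η a` depends `C^m`-smoothly on the
parameter `a` ranging over an open set `U` of a real Banach space `P`. -/
theorem stmt1 {B P : Type*} [NormedAddCommGroup B] [NormedSpace ℝ B] [CompleteSpace B]
    [NormedAddCommGroup P] [NormedSpace ℝ P]
    (U : Set P) (hU : IsOpen U) (m : ℕ) (hm : 1 ≤ m) (κ : ℝ) (hκ : 1 / 5 ≤ κ)
    (S : B → B) (hS : ContDiff ℝ m S) (hS0 : S 0 = 0)
    (hquad : ∀ ξ₁ ξ₂ : B, ‖ξ₁‖ ≤ 1 → ‖ξ₂‖ ≤ 1 →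
      ‖S ξ₁ - S ξ₂‖ ≤ κ * (‖ξ₁‖ + ‖ξ₂‖) * ‖ξ₁ - ξ₂‖)
    (η : P → B) (hη : ContDiffOn ℝ m η U)
    (hηsmall : ∀ a ∈ U, ‖η a‖ < 1 / (10 * κ)) :
    ∃ ξ : P → B, ContDiffOn ℝ m ξ U ∧
      ∀ a ∈ U, ‖ξ a‖ ≤ 1 / (5 * κ) ∧ ξ a + S (ξ a) = η a ∧
        ∀ ξ' : B, ‖ξ'‖ ≤ 1 / (5 * κ) → ξ' + S ξ' = η a → ξ' = ξ a := by
  have hκ0 : (0 : ℝ) < κ := lt_of_lt_of_le (by norm_num) hκ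
  set r : ℝ := 1 / (5 * κ) with hr_def
  have hr0 : 0 < r := by positivity
  have hr1 : r ≤ 1 := by
    rw [hr_def, div_le_one (by positivity)]
    linarith
  have hr' : (7 : ℝ) / (50 * κ) < r := by
    rw [hr_def, div_lt_div_iff₀ (by positivity) (by positivity)]
    nlinarith
  -- S is (2/5)-Lipschitz on the closed ball of radius r
  have hlip : LipschitzOnWith (2 / 5 : ℝ≥0) S (Metric.closedBall (0 : B) r) := by
    apply LipschitzOnWith.of_dist_le_mul
    intro x hx y hy
    rw [Metric.mem_closedBall, dist_zero_right] at hx hy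
    have h1 := hquad x y (hx.trans hr1) (hy.trans hr1)
    rw [dist_eq_norm, dist_eq_norm]
    calc ‖S x - S y‖ ≤ κ * (‖x‖ + ‖y‖) * ‖x - y‖ := h1
      _ ≤ κ * (r + r) * ‖x - y‖ := by
          apply mul_le_mul_of_nonneg_right _ (norm_nonneg _)
          exact mul_le_mul_of_nonneg_left (add_le_add hx hy) hκ0.le
      _ = (2 / 5 : ℝ≥0) * ‖x - y‖ := by
          push_cast
          rw [hr_def]
          field_simp
          ring
  -- key existence-uniqueness lemma for each rhs
  have key : ∀ b : B, ‖b‖ < 1 / (10 * κ) →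
      ∃ x : B, ‖x‖ ≤ 7 / (50 * κ) ∧ x + S x = b ∧
        ∀ x' : B, ‖x'‖ ≤ r → x' + S x' = b → x' = x := by
    intro b hb
    have uniq : ∀ x x' : B, ‖x‖ ≤ r → ‖x'‖ ≤ r → x + S x = b → x' + S x' = b → x' = x := by
      intro x x' hx hx' he he'
      have hdiff : x' - x = S x - S x' := by
        rw [sub_eq_sub_iff_add_eq_add]
        exact (he'.trans he.symm).trans (add_comm _ _)
      have h1 := hquad x x' (hx.trans hr1) (hx'.trans hr1)
      have h2 : ‖x' - x‖ ≤ κ * (r + r) * ‖x - x'‖ := by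
        rw [hdiff]
        refine h1.trans ?_
        apply mul_le_mul_of_nonneg_right _ (norm_nonneg _)
        exact mul_le_mul_of_nonneg_left (add_le_add hx hx') hκ0.le
      have h3 : κ * (r + r) = 2 / 5 := by rw [hr_def]; field_simp; ring
      rw [← norm_neg (x - x'), neg_sub] at h2
      have : ‖x' - x‖ = 0 := by nlinarith [norm_nonneg (x' - x)]
      exact sub_eq_zero.mp (norm_eq_zero.mp this)
    -- contraction on the closed ball
    have hbound : ∀ x : B, ‖x‖ ≤ r → ‖b - S x‖ ≤ 7 / (50 * κ) := by
      intro x hx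
      have h1 := hquad x 0 (hx.trans hr1) (by simp)
      simp only [hS0, sub_zero, norm_zero, add_zero] at h1
      have hx2 : κ * ‖x‖ * ‖x‖ ≤ κ * r * r := by
        have h4 := mul_le_mul hx hx (norm_nonneg x) hr0.le
        nlinarith
      have hrr : κ * r * r = 1 / (25 * κ) := by rw [hr_def]; field_simp; ring
      calc ‖b - S x‖ ≤ ‖b‖ + ‖S x‖ := norm_sub_le _ _
        _ ≤ 1 / (10 * κ) + 1 / (25 * κ) := by
            refine add_le_add hb.le ?_
            calc ‖S x‖ ≤ κ * ‖x‖ * ‖x‖ := h1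
              _ ≤ 1 / (25 * κ) := by rw [← hrr]; exact hx2
        _ = 7 / (50 * κ) := by field_simp; ring
    have hmem : ∀ x : B, ‖x‖ ≤ r → b - S x ∈ Metric.closedBall (0 : B) r := by
      intro x hx
      rw [Metric.mem_closedBall, dist_zero_right]
      exact (hbound x hx).trans hr'.le
    haveI : CompleteSpace (Metric.closedBall (0 : B) r) :=
      Metric.isClosed_closedBall.completeSpace_coe
    haveI : Nonempty (Metric.closedBall (0 : B) r) := ⟨⟨0, by simp [hr0.le]⟩⟩
    set T : Metric.closedBall (0 : B) r → Metric.closedBall (0 : B) r := fun x =>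
      ⟨b - S x.1, by
        refine hmem x.1 ?_
        have hx2 := x.2
        rwa [Metric.mem_closedBall, dist_zero_right] at hx2⟩ with hT
    have hcontr : ContractingWith (2 / 5 : ℝ≥0) T := by
      constructor
      · rw [← NNReal.coe_lt_coe]; norm_num
      · apply LipschitzWith.of_dist_le_mul
        intro x y
        have hx : (x : B) ∈ Metric.closedBall (0 : B) r := x.2
        have hy : (y : B) ∈ Metric.closedBall (0 : B) r := y.2
        have := hlip.dist_le_mul _ hx _ hy
        calc dist (T x) (T y) = dist (b - S x.1) (b - S y.1) := rfl
          _ = dist (S x.1) (S y.1) := by rw [dist_sub_left]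
          _ ≤ (2 / 5 : ℝ≥0) * dist (x : B) (y : B) := this
          _ = (2 / 5 : ℝ≥0) * dist x y := by rw [Subtype.dist_eq]
    set p := hcontr.fixedPoint T with hp
    have hfix : T p = p := hcontr.fixedPoint_isFixedPt
    have hpval : b - S p.1 = p.1 := congrArg Subtype.val hfix
    have hpmem : ‖p.1‖ ≤ r := by
      have := p.2
      rwa [Metric.mem_closedBall, dist_zero_right] at this
    refine ⟨p.1, ?_, ?_, ?_⟩
    · rw [← hpval]; exact hbound p.1 hpmem
    · exact (sub_eq_iff_eq_add.mp hpval).symm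
    · intro x' hx' he'
      exact uniq p.1 x' hpmem hx' (sub_eq_iff_eq_add.mp hpval).symm he'
  -- define ξ via choice
  classical
  set ξ : P → B := fun a => if h : a ∈ U then (key (η a) (hηsmall a h)).choose else 0 with hξdef
  have hξspec : ∀ a (ha : a ∈ U), ‖ξ a‖ ≤ 7 / (50 * κ) ∧ ξ a + S (ξ a) = η a ∧
      ∀ x' : B, ‖x'‖ ≤ r → x' + S x' = η a → x' = ξ a := by
    intro a ha
    have := (key (η a) (hηsmall a ha)).choose_spec
    simpa [hξdef, dif_pos ha] using this
  have hm' : (m : WithTop ℕ∞) ≠ 0 := by exact_mod_cast (Nat.one_le_iff_ne_zero.mp hm)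
  -- smoothness at each point of U
  have hsmooth : ∀ a₀ ∈ U, ContDiffAt ℝ m ξ a₀ := by
    intro a₀ ha₀
    obtain ⟨hx₀r, hx₀eq, hx₀uniq⟩ := hξspec a₀ ha₀
    set x₀ := ξ a₀ with hx₀def
    have hx₀lt : ‖x₀‖ < r := lt_of_le_of_lt hx₀r hr'
    have hSd : DifferentiableAt ℝ S x₀ := (hS.differentiable hm').differentiableAt
    set D := fderiv ℝ S x₀ with hD_def
    have hnhds : Metric.closedBall (0 : B) r ∈ nhds x₀ :=
      Metric.closedBall_mem_nhds_of_mem (by simpa [dist_zero_right] using hx₀lt)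
    have hDnorm : ‖D‖ ≤ (2 / 5 : ℝ≥0) := hSd.hasFDerivAt.le_of_lipschitzOn hnhds hlip
    have hDlt : ‖-D‖ < 1 := by
      rw [norm_neg]
      refine lt_of_le_of_lt hDnorm ?_
      norm_num
    set u : (B →L[ℝ] B)ˣ := Units.oneSub (-D) hDlt with hu
    set E : B ≃L[ℝ] B := ContinuousLinearEquiv.ofUnit u with hE
    have hEcoe : (E : B →L[ℝ] B) = ContinuousLinearMap.id ℝ B + D := by
      have : (E : B →L[ℝ] B) = u.val := rfl
      rw [this, hu, Units.val_oneSub, sub_neg_eq_add, ContinuousLinearMap.one_def]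
    set F : B → B := fun x => x + S x with hF_def
    have hF : ContDiffAt ℝ m F x₀ := (contDiff_id.add hS).contDiffAt
    have hF' : HasFDerivAt F (E : B →L[ℝ] B) x₀ := by
      rw [hEcoe]
      exact (hasFDerivAt_id x₀).add hSd.hasFDerivAt
    set G : B → B := hF.localInverse hF' hm' with hG_def
    have hG : ContDiffAt ℝ m G (F x₀) := hF.to_localInverse hF' hm'
    have hFx₀ : F x₀ = η a₀ := hx₀eq
    have hGFx₀ : G (F x₀) = x₀ := hF.localInverse_apply_image hF' hm'
    have hri : ∀ᶠ y in nhds (F x₀), F (G y) = y :=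
      (hF.hasStrictFDerivAt' hF' hm').eventually_right_inverse
    have hηc : ContinuousAt η a₀ := (hη.contDiffAt (hU.mem_nhds ha₀)).continuousAt
    have hGc : ContinuousAt G (η a₀) := by rw [← hFx₀]; exact hG.continuousAt
    have hGηc : ContinuousAt (fun a => G (η a)) a₀ := hGc.comp hηc
    have ev1 : ∀ᶠ a in nhds a₀, a ∈ U := hU.mem_nhds ha₀
    have ev2 : ∀ᶠ a in nhds a₀, F (G (η a)) = η a := by
      rw [hFx₀] at hri
      exact hηc.eventually hri
    have ev3 : ∀ᶠ a in nhds a₀, G (η a) ∈ Metric.ball (0 : B) r := by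
      apply hGηc.preimage_mem_nhds
      apply Metric.isOpen_ball.mem_nhds
      have hGη₀ : G (η a₀) = x₀ := by rw [← hFx₀]; exact hGFx₀
      rw [Metric.mem_ball, dist_zero_right, hGη₀]
      exact hx₀lt
    have ev : ξ =ᶠ[nhds a₀] fun a => G (η a) := by
      filter_upwards [ev1, ev2, ev3] with a haU hFG hball
      obtain ⟨_, _, huniq⟩ := hξspec a haU
      rw [Metric.mem_ball, dist_zero_right] at hball
      exact (huniq (G (η a)) hball.le (by simpa [hF_def] using hFG)).symm
    have hGη : ContDiffAt ℝ m (fun a => G (η a)) a₀ := by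
      have hG' : ContDiffAt ℝ m G (η a₀) := by rw [← hFx₀]; exact hG
      exact hG'.comp a₀ (hη.contDiffAt (hU.mem_nhds ha₀))
    exact hGη.congr_of_eventuallyEq ev
  refine ⟨ξ, fun a ha => (hsmooth a ha).contDiffWithinAt, fun a ha => ?_⟩
  obtain ⟨h1, h2, h3⟩ := hξspec a ha
  exact ⟨h1.trans hr'.le, h2, fun ξ' hξ' he => h3 ξ' hξ' he⟩
end

section
/- Let μ > 0 and let f : [0, ∞) → ℝ be a twice differentiable function such that f(t) ≥ 0 for all t ≥ 0, f''(t) ≥ 4μ²·f(t) for all t ≥ 0, and f(t) → 0 as t → ∞. Then f(t) ≤ f(0)·e^{−2μt} for all t ≥ 0. -/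
open Set Filter Real

private lemma monoAux {a : ℝ} {g g' : ℝ → ℝ}
    (hg : ∀ t ∈ Set.Ici a, HasDerivWithinAt g (g' t) (Set.Ici a) t)
    (h0 : ∀ t ∈ Set.Ici a, 0 ≤ g' t) : MonotoneOn g (Set.Ici a) := by
  apply monotoneOn_of_hasDerivWithinAt_nonneg (convex_Ici a) (f' := g')
  · exact fun t ht => (hg t ht).continuousWithinAt
  · rw [interior_Ici]
    exact fun x hx => ((hg x (Set.mem_Ici.mpr (le_of_lt hx))).mono Set.Ioi_subset_Ici_self)
  · rw [interior_Ici]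
    exact fun x hx => h0 x (Set.mem_Ici.mpr (le_of_lt hx))

private lemma antiAux {a : ℝ} {g g' : ℝ → ℝ}
    (hg : ∀ t ∈ Set.Ici a, HasDerivWithinAt g (g' t) (Set.Ici a) t)
    (h0 : ∀ t ∈ Set.Ici a, g' t ≤ 0) : AntitoneOn g (Set.Ici a) := by
  apply antitoneOn_of_hasDerivWithinAt_nonpos (convex_Ici a) (f' := g')
  · exact fun t ht => (hg t ht).continuousWithinAt
  · rw [interior_Ici]
    exact fun x hx => ((hg x (Set.mem_Ici.mpr (le_of_lt hx))).mono Set.Ioi_subset_Ici_self)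
  · rw [interior_Ici]
    exact fun x hx => h0 x (Set.mem_Ici.mpr (le_of_lt hx))

/-- Differential inequality comparison (key step in the proof of Lemma 2.2 of the
paper): a nonnegative, twice differentiable function on `[0,∞)` with
`f'' ≥ 4μ²·f` and `f(t) → 0` at infinity satisfies `f(t) ≤ f(0)·e^(-2μt)`. -/
theorem stmt4 (μ : ℝ) (hμ : 0 < μ) (f f' f'' : ℝ → ℝ)
    (hf : ∀ t ∈ Set.Ici (0 : ℝ), HasDerivWithinAt f (f' t) (Set.Ici 0) t)
    (hf' : ∀ t ∈ Set.Ici (0 : ℝ), HasDerivWithinAt f' (f'' t) (Set.Ici 0) t)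
    (hpos : ∀ t ≥ (0 : ℝ), 0 ≤ f t)
    (hineq : ∀ t ≥ (0 : ℝ), 4 * μ ^ 2 * f t ≤ f'' t)
    (hlim : Filter.Tendsto f Filter.atTop (nhds 0)) :
    ∀ t ≥ (0 : ℝ), f t ≤ f 0 * Real.exp (-(2 * μ * t)) := by
  -- the exponential helper derivatives
  have hexp : ∀ (c t : ℝ), HasDerivAt (fun s => Real.exp (c * s)) (c * Real.exp (c * t)) t := by
    intro c t
    have h1 : HasDerivAt (fun s : ℝ => c * s) c t := by
      simpa using (hasDerivAt_id t).const_mul c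
    simpa [mul_comm] using h1.exp
  -- G = (f' + 2μ f) e^{-2μ t}
  set G : ℝ → ℝ := fun t => (f' t + 2 * μ * f t) * Real.exp (-(2 * μ) * t) with hGdef
  have hG : ∀ t ∈ Set.Ici (0 : ℝ),
      HasDerivWithinAt G ((f'' t - 4 * μ ^ 2 * f t) * Real.exp (-(2 * μ) * t)) (Set.Ici 0) t := by
    intro t ht
    have h1 : HasDerivWithinAt (fun s => f' s + 2 * μ * f s) (f'' t + 2 * μ * f' t)
        (Set.Ici 0) t := (hf' t ht).add ((hf t ht).const_mul (2 * μ))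
    have h2 := (hexp (-(2 * μ)) t).hasDerivWithinAt (s := Set.Ici (0:ℝ))
    have := h1.fun_mul h2
    exact this.congr_deriv (by ring)
  have hGmono : MonotoneOn G (Set.Ici 0) :=
    monoAux hG (fun t ht => mul_nonneg (by linarith [hineq t ht]) (Real.exp_pos _).le)
  -- derivative of H = f · e^{2μ t} within any Ici a with a ≥ 0
  have hH : ∀ a ≥ (0:ℝ), ∀ t ∈ Set.Ici a,
      HasDerivWithinAt (fun s => f s * Real.exp (2 * μ * s))
        ((f' t + 2 * μ * f t) * Real.exp (2 * μ * t)) (Set.Ici a) t := by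
    intro a ha t ht
    have ht0 : t ∈ Set.Ici (0:ℝ) := le_trans ha ht
    have h1 : HasDerivWithinAt f (f' t) (Set.Ici a) t :=
      (hf t ht0).mono (Set.Ici_subset_Ici.mpr ha)
    have h2 := (hexp (2 * μ) t).hasDerivWithinAt (s := Set.Ici a)
    have := h1.fun_mul h2
    exact this.congr_deriv (by ring)
  -- G ≤ 0 everywhere on [0, ∞)
  have hGle : ∀ a ≥ (0:ℝ), G a ≤ 0 := by
    intro a ha
    by_contra hpos'
    push_neg at hpos'
    set c : ℝ := G a / (4 * μ) with hc
    have hcpos : 0 < c := div_pos hpos' (by linarith)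
    -- K = f t e^{2μt} - c e^{4μt} is monotone on [a, ∞)
    set K : ℝ → ℝ := fun t => f t * Real.exp (2 * μ * t) - c * Real.exp (4 * μ * t) with hK
    have hKd : ∀ t ∈ Set.Ici a, HasDerivWithinAt K
        ((f' t + 2 * μ * f t) * Real.exp (2 * μ * t) - c * (4 * μ * Real.exp (4 * μ * t)))
        (Set.Ici a) t := by
      intro t ht
      exact (hH a ha t ht).sub (((hexp (4 * μ) t).const_mul c).hasDerivWithinAt)
    have hKmono : MonotoneOn K (Set.Ici a) := by
      apply monoAux hKd
      intro t ht
      have hGa : G a ≤ G t := hGmono ha (le_trans ha ht) ht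
      have hexp4 : Real.exp (4 * μ * t) = Real.exp (2 * μ * t) * Real.exp (2 * μ * t) := by
        rw [← Real.exp_add]; ring_nf
      have hid0 : Real.exp (-(2 * μ) * t) * Real.exp (2 * μ * t) = 1 := by
        rw [← Real.exp_add]; ring_nf; exact Real.exp_zero
      have hGt : (f' t + 2 * μ * f t) = G t * Real.exp (2 * μ * t) := by
        rw [hGdef]
        simp only
        linear_combination (-(f' t + 2 * μ * f t)) * hid0
      have hc4 : c * (4 * μ) = G a := by rw [hc]; field_simp
      have hep : (0:ℝ) < Real.exp (2 * μ * t) := Real.exp_pos _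
      calc (0:ℝ) = (G a - G a) * (Real.exp (2 * μ * t) * Real.exp (2 * μ * t)) := by ring
        _ ≤ (G t - G a) * (Real.exp (2 * μ * t) * Real.exp (2 * μ * t)) := by nlinarith
        _ = (f' t + 2 * μ * f t) * Real.exp (2 * μ * t) - c * (4 * μ * Real.exp (4 * μ * t)) := by
            rw [hGt, hexp4, ← hc4]; ring
    -- so f t ≥ c e^{2μt} + K a e^{-2μt} for t ≥ a
    have hlb : ∀ t ≥ a, c * Real.exp (2 * μ * t) + K a * Real.exp (-(2 * μ) * t) ≤ f t := by
      intro t ht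
      have := hKmono (Set.self_mem_Ici) ht ht
      have hid : Real.exp (2 * μ * t) * Real.exp (-(2 * μ) * t) = 1 := by
        rw [← Real.exp_add]; ring_nf; exact Real.exp_zero
      have h4 : Real.exp (4 * μ * t) = Real.exp (2 * μ * t) * Real.exp (2 * μ * t) := by
        rw [← Real.exp_add]; ring_nf
      have hep : (0:ℝ) < Real.exp (-(2 * μ) * t) := Real.exp_pos _
      -- K a ≤ K t = f t e^{2μt} - c e^{4μt}; multiply by e^{-2μt}
      have h5 : K a * Real.exp (-(2 * μ) * t) ≤
          (f t * Real.exp (2 * μ * t) - c * Real.exp (4 * μ * t)) * Real.exp (-(2 * μ) * t) := by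
        apply mul_le_mul_of_nonneg_right _ hep.le
        simpa [hK] using this
      calc c * Real.exp (2 * μ * t) + K a * Real.exp (-(2 * μ) * t)
          ≤ c * Real.exp (2 * μ * t) +
            (f t * Real.exp (2 * μ * t) - c * Real.exp (4 * μ * t)) * Real.exp (-(2 * μ) * t) := by
            linarith
        _ = f t := by
            rw [h4]
            linear_combination (f t - c * Real.exp (2 * μ * t)) * hid
    -- lower bound tendsto ∞, contradiction with f → 0
    have h2μ : Filter.Tendsto (fun t : ℝ => 2 * μ * t) Filter.atTop Filter.atTop :=
      Filter.Tendsto.const_mul_atTop (by linarith) Filter.tendsto_id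
    have hE1 : Filter.Tendsto (fun t => c * Real.exp (2 * μ * t)) Filter.atTop Filter.atTop :=
      Filter.Tendsto.const_mul_atTop hcpos (Real.tendsto_exp_atTop.comp h2μ)
    have hE2 : Filter.Tendsto (fun t => K a * Real.exp (-(2 * μ) * t)) Filter.atTop (nhds 0) := by
      have hneg : Filter.Tendsto (fun t : ℝ => -(2 * μ) * t) Filter.atTop Filter.atBot := by
        have heq : (fun t : ℝ => -(2 * μ) * t) = (fun x : ℝ => -x) ∘ (fun t => 2 * μ * t) := by
          funext t; simp [neg_mul]
        rw [heq]
        exact Filter.tendsto_neg_atTop_atBot.comp h2μ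
      have := (Real.tendsto_exp_atBot.comp hneg).const_mul (K a)
      simpa using this
    have ev1 : ∀ᶠ t in Filter.atTop, f t < 1 :=
      hlim.eventually (eventually_lt_nhds zero_lt_one)
    have ev2 : ∀ᶠ t in Filter.atTop, (2:ℝ) ≤ c * Real.exp (2 * μ * t) :=
      hE1.eventually_ge_atTop 2
    have ev3 : ∀ᶠ t in Filter.atTop, (-1:ℝ) < K a * Real.exp (-(2 * μ) * t) :=
      hE2.eventually (eventually_gt_nhds (by norm_num))
    have ev4 : ∀ᶠ t in Filter.atTop, a ≤ t := Filter.eventually_ge_atTop a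
    obtain ⟨t, h1, h2, h3, h4⟩ := (ev1.and (ev2.and (ev3.and ev4))).exists
    have := hlb t h4
    linarith
  -- now f t e^{2μt} is antitone on [0,∞)
  have hHanti : AntitoneOn (fun s => f s * Real.exp (2 * μ * s)) (Set.Ici 0) := by
    apply antiAux (hH 0 le_rfl)
    intro t ht
    have := hGle t ht
    have hep : (0:ℝ) < Real.exp (-(2 * μ) * t) := Real.exp_pos _
    have h1 : f' t + 2 * μ * f t ≤ 0 := by
      by_contra h
      push_neg at h
      have : 0 < G t := mul_pos h hep
      linarith
    exact mul_nonpos_of_nonpos_of_nonneg h1 (Real.exp_pos _).le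
  intro t ht
  have := hHanti (Set.self_mem_Ici) ht ht
  simp only [mul_zero, Real.exp_zero, mul_one] at this
  have hid : Real.exp (2 * μ * t) * Real.exp (-(2 * μ * t)) = 1 := by
    rw [← Real.exp_add]; ring_nf; exact Real.exp_zero
  have hep : (0:ℝ) < Real.exp (-(2 * μ * t)) := Real.exp_pos _
  have := mul_le_mul_of_nonneg_right this hep.le
  calc f t = f t * (Real.exp (2 * μ * t) * Real.exp (-(2 * μ * t))) := by rw [hid]; ring
    _ = f t * Real.exp (2 * μ * t) * Real.exp (-(2 * μ * t)) := by ring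
    _ ≤ f 0 * Real.exp (-(2 * μ * t)) := this
end
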